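/- The function σ ↦ V(σ)/V'(σ)², where V(σ) = e^σ − 1 − σ, extends continuously to σ = 0 with value 1/2 and is strictly convex on ℝ. -/

import Mathlib

open Filter Set Real

noncomputable def Gc : ℂ → ℂ := fun z =>
  if z = 0 then 2⁻¹ else (Complex.exp z - 1 - z) / (Complex.exp z - 1) ^ 2

lemma cexp_ne_one {z : ℂ} (h0 : z ≠ 0) (h1 : ‖z‖ < 1) : Complex.exp z ≠ 1 := by
  intro h
  rcases Complex.exp_eq_one_iff.1 h with ⟨n, rfl⟩
  rcases eq_or_ne n 0 with rfl | hn
  · simp at h0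
  · have h2 : (1:ℝ) ≤ |(n:ℝ)| := by exact_mod_cast Int.one_le_abs hn
    have hnorm : ‖(n : ℂ) * (2 * Real.pi * Complex.I)‖ = |(n:ℝ)| * (2 * Real.pi) := by
      simp [abs_of_nonneg Real.pi_pos.le]
    rw [hnorm] at h1
    nlinarith [Real.pi_gt_three]

lemma Gc_diff : ∀ᶠ z in nhdsWithin (0:ℂ) {(0:ℂ)}ᶜ, DifferentiableAt ℂ Gc z := by
  have hball : Metric.ball (0:ℂ) 1 ∈ nhds (0:ℂ) := Metric.ball_mem_nhds _ one_pos
  filter_upwards [self_mem_nhdsWithin, mem_nhdsWithin_of_mem_nhds hball] with z hz hzb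
  have hz0 : z ≠ 0 := hz
  have hz1 : ‖z‖ < 1 := by simpa using hzb
  have hne : Complex.exp z - 1 ≠ 0 := sub_ne_zero.2 (cexp_ne_one hz0 hz1)
  have heq : Gc =ᶠ[nhds z] fun w => (Complex.exp w - 1 - w) / (Complex.exp w - 1) ^ 2 := by
    filter_upwards [IsOpen.mem_nhds isOpen_compl_singleton hz0] with w hw
    exact if_neg hw
  have hd : DifferentiableAt ℂ (fun w => (Complex.exp w - 1 - w) / (Complex.exp w - 1) ^ 2) z :=
    DifferentiableAt.div (by fun_prop) (by fun_prop) (pow_ne_zero _ hne)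
  exact hd.congr_of_eventuallyEq heq

lemma tendsto_A : Tendsto (fun z : ℂ => (Complex.exp z - 1 - z) / z ^ 2)
    (nhdsWithin (0:ℂ) {(0:ℂ)}ᶜ) (nhds 2⁻¹) := by
  rw [← tendsto_sub_nhds_zero_iff]
  apply squeeze_zero_norm' (a := fun z : ℂ => (2/9) * ‖z‖)
  · have hball : Metric.ball (0:ℂ) 1 ∈ nhds (0:ℂ) := Metric.ball_mem_nhds _ one_pos
    filter_upwards [self_mem_nhdsWithin, mem_nhdsWithin_of_mem_nhds hball] with z hz hzb
    have hz0 : (z:ℂ) ≠ 0 := hz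
    have hz1 : ‖z‖ ≤ 1 := by
      have : ‖z‖ < 1 := by simpa using hzb
      exact this.le
    have hb := Complex.exp_bound (x := z) (by simpa using hz1) (n := 3) (by norm_num)
    have hsum : (∑ m ∈ Finset.range 3, z ^ m / m.factorial) = 1 + z + z^2/2 := by
      norm_num [Finset.sum_range_succ]
    rw [hsum] at hb
    have hkey : (Complex.exp z - 1 - z) / z ^ 2 - 2⁻¹
        = (Complex.exp z - (1 + z + z^2/2)) / z ^ 2 := by
      field_simp
      ring
    rw [hkey]
    rw [norm_div]
    rw [div_le_iff₀ (norm_pos_iff.2 (pow_ne_zero 2 hz0))]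
    have : ‖z ^ 2‖ = ‖z‖^2 := by simp
    rw [this]
    calc ‖Complex.exp z - (1 + z + z ^ 2 / 2)‖ ≤ ‖z‖^3 * (4 * (6*3:ℝ)⁻¹) := by
          have h6 : ((Nat.factorial 3 : ℕ) : ℝ) = 6 := by norm_num [Nat.factorial]
          simpa [h6] using hb
      _ ≤ 2/9 * ‖z‖ * ‖z‖^2 := by ring_nf; nlinarith [norm_nonneg z]
  · have : Tendsto (fun z : ℂ => (2/9) * ‖z‖) (nhds 0) (nhds 0) := by
      have := (continuous_norm (E := ℂ)).tendsto (0:ℂ)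
      simpa using this.const_mul (2/9:ℝ)
    exact this.mono_left nhdsWithin_le_nhds

lemma tendsto_B : Tendsto (fun z : ℂ => (Complex.exp z - 1) / z)
    (nhdsWithin (0:ℂ) {(0:ℂ)}ᶜ) (nhds 1) := by
  have h := (hasDerivAt_iff_tendsto_slope).1 (Complex.hasDerivAt_exp 0)
  rw [Complex.exp_zero] at h
  refine h.congr' ?_
  filter_upwards [self_mem_nhdsWithin] with z hz
  simp [slope_def_field, Complex.exp_zero, div_eq_div_iff]

lemma Gc_contAt : ContinuousAt Gc 0 := by
  have h1 : Tendsto Gc (nhdsWithin (0:ℂ) {(0:ℂ)}ᶜ) (nhds 2⁻¹) := by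
    have hdiv : Tendsto (fun z : ℂ =>
        ((Complex.exp z - 1 - z) / z ^ 2) / (((Complex.exp z - 1) / z) ^ 2))
        (nhdsWithin (0:ℂ) {(0:ℂ)}ᶜ) (nhds 2⁻¹) := by
      have := tendsto_A.div (tendsto_B.pow 2) (by norm_num)
      rw [one_pow, div_one] at this
      exact this
    refine hdiv.congr' ?_
    filter_upwards [self_mem_nhdsWithin] with z hz
    have hz0 : (z:ℂ) ≠ 0 := hz
    have hz2 : (z:ℂ)^2 ≠ 0 := pow_ne_zero _ hz0
    simp only [Gc, if_neg hz0]
    rw [div_pow, div_div_div_cancel_right₀]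
    exact hz2
  have : nhds (0:ℂ) = nhdsWithin (0:ℂ) {(0:ℂ)}ᶜ ⊔ pure 0 :=
    (nhdsNE_sup_pure 0).symm
  rw [ContinuousAt, this]
  refine Tendsto.sup ?_ ?_
  · simpa [Gc] using h1
  · simpa [Gc] using tendsto_pure_nhds Gc 0

lemma Gc_analytic : AnalyticAt ℂ Gc 0 :=
  Complex.analyticAt_of_differentiable_on_punctured_nhds_of_continuousAt Gc_diff Gc_contAt

noncomputable def Fr : ℝ → ℝ := fun σ =>
  if σ = 0 then 1/2 else (Real.exp σ - 1 - σ) / (Real.exp σ - 1) ^ 2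

lemma Fr_eq (σ : ℝ) : Fr σ = Complex.re (Gc (σ : ℂ)) := by
  by_cases h : σ = 0
  · subst h; norm_num [Fr, Gc]
  · have h' : (σ : ℂ) ≠ 0 := by exact_mod_cast h
    simp only [Fr, Gc, if_neg h, if_neg h']
    have : ((Real.exp σ - 1 - σ : ℝ) : ℂ) / (((Real.exp σ - 1 : ℝ)) : ℂ) ^ 2
        = (Complex.exp σ - 1 - σ) / (Complex.exp σ - 1) ^ 2 := by
      push_cast [Complex.ofReal_exp]
      ring_nf
    rw [← this, ← Complex.ofReal_pow, ← Complex.ofReal_div, Complex.ofReal_re]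

lemma Fr_analytic : AnalyticAt ℝ Fr 0 := by
  have h0 : AnalyticAt ℝ (fun σ : ℝ => (σ : ℂ)) 0 := by
    have := Complex.ofRealCLM.analyticAt (0 : ℝ)
    exact this.congr (by filter_upwards with x; simp)
  have h1 : AnalyticAt ℝ Gc ((0:ℝ) : ℂ) := by
    have := Gc_analytic.restrictScalars (𝕜 := ℝ)
    simpa using this
  have h2 : AnalyticAt ℝ (fun z : ℂ => Complex.re z) (Gc ((0:ℝ):ℂ)) := by
    have := Complex.reCLM.analyticAt (Gc ((0:ℝ):ℂ))
    exact this.congr (by filter_upwards with x; simp)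
  have h3 : AnalyticAt ℝ (fun σ : ℝ => Complex.re (Gc (σ:ℂ))) 0 := (h2.comp h1).comp h0
  exact h3.congr (by filter_upwards with x; rw [Fr_eq])

noncomputable def F1 : ℝ → ℝ := fun σ =>
  (1 - Real.exp σ ^ 2 + 2 * σ * Real.exp σ) / (Real.exp σ - 1) ^ 3

noncomputable def F2 : ℝ → ℝ := fun σ =>
  Real.exp σ * (Real.exp σ ^ 2 + 4 * Real.exp σ - 4 * σ * Real.exp σ - 2 * σ - 5)
    / (Real.exp σ - 1) ^ 4

lemma rexp_ne_one {σ : ℝ} (h : σ ≠ 0) : Real.exp σ ≠ 1 := fun h1 => h ((Real.exp_eq_one_iff σ).1 h1)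

lemma rexp_sub_one_ne {σ : ℝ} (h : σ ≠ 0) : Real.exp σ - 1 ≠ 0 :=
  sub_ne_zero.2 (rexp_ne_one h)

lemma hFr_deriv {σ : ℝ} (h : σ ≠ 0) : HasDerivAt Fr (F1 σ) σ := by
  have hE := Real.hasDerivAt_exp σ
  have hne := rexp_sub_one_ne h
  have num : HasDerivAt (fun x : ℝ => Real.exp x - 1 - x) (Real.exp σ - 1) σ := by
    exact (hE.sub_const 1).sub (hasDerivAt_id σ)
  have den : HasDerivAt (fun x : ℝ => (Real.exp x - 1) ^ 2)
      (2 * (Real.exp σ - 1) ^ 1 * Real.exp σ) σ := by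
    exact ((hE.sub_const 1).pow 2).congr_deriv (by norm_num)
  have hq := num.div den (pow_ne_zero 2 hne)
  have heq : Fr =ᶠ[nhds σ] fun x => (Real.exp x - 1 - x) / (Real.exp x - 1) ^ 2 := by
    filter_upwards [IsOpen.mem_nhds isOpen_compl_singleton h] with x hx
    exact if_neg hx
  refine (hq.congr_of_eventuallyEq heq).congr_deriv ?_
  simp only [F1]
  field_simp
  ring

lemma hF1_deriv {σ : ℝ} (h : σ ≠ 0) : HasDerivAt F1 (F2 σ) σ := by
  have hE := Real.hasDerivAt_exp σ
  have hne := rexp_sub_one_ne h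
  have num : HasDerivAt (fun x : ℝ => 1 - Real.exp x ^ 2 + 2 * x * Real.exp x)
      (-(2 * Real.exp σ ^ 1 * Real.exp σ) + (2 * Real.exp σ + 2 * σ * Real.exp σ)) σ := by
    have h1 : HasDerivAt (fun x : ℝ => 1 - Real.exp x ^ 2)
        (-(2 * Real.exp σ ^ 1 * Real.exp σ)) σ := by
      exact ((hasDerivAt_const σ 1).sub (hE.pow 2)).congr_deriv (by norm_num)
    have h2 : HasDerivAt (fun x : ℝ => 2 * x * Real.exp x)
        (2 * Real.exp σ + 2 * σ * Real.exp σ) σ := by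
      have := ((hasDerivAt_id σ).const_mul 2).mul hE
      exact this.congr_deriv (by simp only [id]; ring)
      
    exact h1.add h2
  have den : HasDerivAt (fun x : ℝ => (Real.exp x - 1) ^ 3)
      (3 * (Real.exp σ - 1) ^ 2 * Real.exp σ) σ := by
    exact ((hE.sub_const 1).pow 3).congr_deriv (by norm_num)
  have hq := num.div den (pow_ne_zero 3 hne)
  refine hq.congr_deriv ?_
  simp only [F2]
  field_simp
  ring

noncomputable def gg : ℝ → ℝ := fun σ =>
  Real.exp σ ^ 2 + 4 * Real.exp σ - 4 * σ * Real.exp σ - 2 * σ - 5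

noncomputable def gg1 : ℝ → ℝ := fun σ => 2 * Real.exp σ ^ 2 - 4 * σ * Real.exp σ - 2

lemma hgg_deriv (σ : ℝ) : HasDerivAt gg (gg1 σ) σ := by
  have hE := Real.hasDerivAt_exp σ
  have h1 : HasDerivAt (fun x : ℝ => Real.exp x ^ 2) (2 * Real.exp σ ^ 1 * Real.exp σ) σ := by
    exact (hE.pow 2).congr_deriv (by norm_num)
  have h2 : HasDerivAt (fun x : ℝ => 4 * x * Real.exp x)
      (4 * Real.exp σ + 4 * σ * Real.exp σ) σ := by
    have := ((hasDerivAt_id σ).const_mul 4).mul hE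
    exact this.congr_deriv (by simp only [id]; ring)
  have := (((h1.add (hE.const_mul 4)).sub h2).sub ((hasDerivAt_id σ).const_mul 2)).sub_const 5
  refine (this.congr_deriv ?_).congr_of_eventuallyEq ?_
  · simp [gg1]; ring
  · filter_upwards with x; simp [gg]; try ring

lemma hgg1_deriv (σ : ℝ) : HasDerivAt gg1 (4 * Real.exp σ * (Real.exp σ - 1 - σ)) σ := by
  have hE := Real.hasDerivAt_exp σ
  have h1 : HasDerivAt (fun x : ℝ => 2 * Real.exp x ^ 2) (2 * (2 * Real.exp σ ^ 1 * Real.exp σ)) σ := by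
    exact ((hE.pow 2).const_mul 2).congr_deriv (by norm_num)
  have h2 : HasDerivAt (fun x : ℝ => 4 * x * Real.exp x)
      (4 * Real.exp σ + 4 * σ * Real.exp σ) σ := by
    have := ((hasDerivAt_id σ).const_mul 4).mul hE
    exact this.congr_deriv (by simp only [id]; ring)
  have := (h1.sub h2).sub_const 2
  refine (this.congr_deriv ?_).congr_of_eventuallyEq ?_
  · ring
  · filter_upwards with x; simp [gg1]

lemma gg1_pos {σ : ℝ} (h : 0 < σ) : 0 < gg1 σ := by
  have hmono : StrictMonoOn gg1 (Ici (0:ℝ)) := by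
    refine strictMonoOn_of_deriv_pos (convex_Ici 0)
      (Continuous.continuousOn (by unfold gg1; fun_prop)) ?_
    intro x hx
    rw [interior_Ici] at hx
    rw [(hgg1_deriv x).deriv]
    have := Real.add_one_lt_exp (ne_of_gt (show (0:ℝ) < x from hx))
    have hep := Real.exp_pos x
    nlinarith
  have h0 : gg1 0 = 0 := by norm_num [gg1]
  have := hmono (self_mem_Ici) (le_of_lt h : (0:ℝ) ≤ σ) h
  rwa [h0] at this

lemma gg1_neg {σ : ℝ} (h : σ < 0) : gg1 σ < 0 := by
  have hmono : StrictMonoOn gg1 (Iic (0:ℝ)) := by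
    refine strictMonoOn_of_deriv_pos (convex_Iic 0)
      (Continuous.continuousOn (by unfold gg1; fun_prop)) ?_
    intro x hx
    rw [interior_Iic] at hx
    rw [(hgg1_deriv x).deriv]
    have := Real.add_one_lt_exp (ne_of_lt (show x < (0:ℝ) from hx))
    have hep := Real.exp_pos x
    nlinarith
  have h0 : gg1 0 = 0 := by norm_num [gg1]
  have := hmono (le_of_lt h : σ ≤ (0:ℝ)) self_mem_Iic h
  rwa [h0] at this

lemma gg_pos {σ : ℝ} (h : σ ≠ 0) : 0 < gg σ := by
  have h0 : gg 0 = 0 := by norm_num [gg]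
  rcases lt_or_gt_of_ne h with hneg | hpos
  · have hanti : StrictAntiOn gg (Iic (0:ℝ)) := by
      refine strictAntiOn_of_deriv_neg (convex_Iic 0)
        (Continuous.continuousOn (by unfold gg; fun_prop)) ?_
      intro x hx
      rw [interior_Iic] at hx
      rw [(hgg_deriv x).deriv]
      exact gg1_neg hx
    have := hanti (le_of_lt hneg : σ ≤ (0:ℝ)) self_mem_Iic hneg
    rwa [h0] at this
  · have hmono : StrictMonoOn gg (Ici (0:ℝ)) := by
      refine strictMonoOn_of_deriv_pos (convex_Ici 0)
        (Continuous.continuousOn (by unfold gg; fun_prop)) ?_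
      intro x hx
      rw [interior_Ici] at hx
      rw [(hgg_deriv x).deriv]
      exact gg1_pos hx
    have := hmono self_mem_Ici (le_of_lt hpos : (0:ℝ) ≤ σ) hpos
    rwa [h0] at this

lemma F2_pos {σ : ℝ} (h : σ ≠ 0) : 0 < F2 σ := by
  have hne := rexp_sub_one_ne h
  have h4 : (0:ℝ) < (Real.exp σ - 1) ^ 4 :=
    lt_of_le_of_ne (by positivity) (Ne.symm (pow_ne_zero 4 hne))
  have := gg_pos h
  have hep := Real.exp_pos σ
  unfold F2
  unfold gg at this
  positivity

lemma deriv_Fr_eq {σ : ℝ} (h : σ ≠ 0) : deriv Fr σ = F1 σ := (hFr_deriv h).deriv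

lemma contAt_deriv_Fr (σ : ℝ) : ContinuousAt (deriv Fr) σ := by
  by_cases h : σ = 0
  · subst h
    have h := Fr_analytic.eventually_analyticAt
    rw [eventually_nhds_iff] at h
    obtain ⟨t, ht, hto, h0⟩ := h
    have hA : AnalyticOnNhd ℝ Fr t := fun y hy => ht y hy
    exact (hA.deriv 0 h0).continuousAt
  · have hne := rexp_sub_one_ne h
    have hco : ContinuousAt F1 σ := by
      unfold F1
      exact ContinuousAt.div (by fun_prop) (by fun_prop) (pow_ne_zero 3 hne)
    have heq : F1 =ᶠ[nhds σ] deriv Fr := by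
      filter_upwards [IsOpen.mem_nhds isOpen_compl_singleton h] with x hx
      exact (deriv_Fr_eq hx).symm
    exact hco.congr heq

lemma deriv2_Fr_eq {x : ℝ} (hx : x ≠ 0) : deriv (deriv Fr) x = F2 x := by
  have heq : deriv Fr =ᶠ[nhds x] F1 := by
    filter_upwards [IsOpen.mem_nhds isOpen_compl_singleton hx] with y hy
    exact deriv_Fr_eq hy
  rw [heq.deriv_eq, (hF1_deriv hx).deriv]

lemma strictMono_deriv_Fr : StrictMono (deriv Fr) := by
  have hcont : ContinuousOn (deriv Fr) univ := fun x _ => (contAt_deriv_Fr x).continuousWithinAt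
  have hIic : StrictMonoOn (deriv Fr) (Iic (0:ℝ)) := by
    refine strictMonoOn_of_deriv_pos (convex_Iic 0) (hcont.mono (subset_univ _)) ?_
    intro x hx
    rw [interior_Iic] at hx
    rw [deriv2_Fr_eq (ne_of_lt hx)]
    exact F2_pos (ne_of_lt hx)
  have hIci : StrictMonoOn (deriv Fr) (Ici (0:ℝ)) := by
    refine strictMonoOn_of_deriv_pos (convex_Ici 0) (hcont.mono (subset_univ _)) ?_
    intro x hx
    rw [interior_Ici] at hx
    rw [deriv2_Fr_eq (ne_of_gt hx)]
    exact F2_pos (ne_of_gt hx)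
  intro a b hab
  by_cases hb : b ≤ 0
  · exact hIic (hab.le.trans hb) hb hab
  · push_neg at hb
    by_cases ha : 0 ≤ a
    · exact hIci ha hb.le hab
    · push_neg at ha
      exact lt_trans (hIic ha.le self_mem_Iic ha) (hIci self_mem_Ici hb.le hb)

lemma Fr_continuous : Continuous Fr := by
  rw [continuous_iff_continuousAt]
  intro σ
  by_cases h : σ = 0
  · subst h; exact Fr_analytic.continuousAt
  · have hne := rexp_sub_one_ne h
    have hco : ContinuousAt (fun x : ℝ => (Real.exp x - 1 - x) / (Real.exp x - 1) ^ 2) σ :=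
      ContinuousAt.div (by fun_prop) (by fun_prop) (pow_ne_zero 2 hne)
    refine hco.congr ?_
    filter_upwards [IsOpen.mem_nhds isOpen_compl_singleton h] with x hx
    exact (if_neg hx).symm

theorem stmt_8 :
    ∃ F : ℝ → ℝ, Continuous F ∧ F 0 = 1 / 2 ∧
      (∀ σ : ℝ, σ ≠ 0 →
        F σ = (Real.exp σ - 1 - σ) / (Real.exp σ - 1) ^ 2) ∧
      StrictConvexOn ℝ Set.univ F := by
  refine ⟨Fr, Fr_continuous, by norm_num [Fr], fun σ h => if_neg h, ?_⟩
  exact StrictMono.strictConvexOn_univ_of_deriv Fr_continuous strictMono_deriv_Fr
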